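/- Let θ be a real number with 0 < θ < π/2 and let m be a positive natural number. Then Σ_{k=0}^{m−1} sin²((2k+1)θ) = m/2 − sin(4mθ)/(4 sin(2θ)). Moreover, if (m : ℝ) ≥ 1/sin(2θ), then the average (1/m) Σ_{k=0}^{m−1} sin²((2k+1)θ) ≥ 1/4. (This is the key averaging identity behind quantum search with an unknown number t of marked elements: choosing the number of Grover iterations uniformly at random in {0,…,m−1} yields success probability at least 1/4 once m ≥ 1/sin(2θ).) -/

import Mathlib

open Real Finset

lemma cos_sum_aux (θ : ℝ) (m : ℕ) :
    (∑ k ∈ Finset.range m, Real.cos (2 * ((2 * (k : ℝ) + 1) * θ))) * (2 * Real.sin (2 * θ))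
      = Real.sin (4 * m * θ) := by
  induction m with
  | zero => simp
  | succ n ih =>
    rw [Finset.sum_range_succ, add_mul, ih]
    have h := Real.sin_sub_sin (4 * ((n : ℝ) + 1) * θ) (4 * n * θ)
    have e1 : (4 * ((n : ℝ) + 1) * θ - 4 * n * θ) / 2 = 2 * θ := by ring
    have e2 : (4 * ((n : ℝ) + 1) * θ + 4 * n * θ) / 2 = 2 * ((2 * (n : ℝ) + 1) * θ) := by ring
    rw [e1, e2] at h
    push_cast
    linarith

theorem bbht_averaging (θ : ℝ) (hθ0 : 0 < θ) (hθ1 : θ < Real.pi / 2)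
    (m : ℕ) (hm : 0 < m) :
    (∑ k ∈ Finset.range m, Real.sin ((2 * (k : ℝ) + 1) * θ) ^ 2 =
      (m : ℝ) / 2 - Real.sin (4 * m * θ) / (4 * Real.sin (2 * θ))) ∧
    (1 / Real.sin (2 * θ) ≤ (m : ℝ) →
      (1 / (m : ℝ)) * ∑ k ∈ Finset.range m, Real.sin ((2 * (k : ℝ) + 1) * θ) ^ 2
        ≥ 1 / 4) := by
  have hs : 0 < Real.sin (2 * θ) := Real.sin_pos_of_pos_of_lt_pi (by linarith) (by linarith)
  have key : ∑ k ∈ Finset.range m, Real.sin ((2 * (k : ℝ) + 1) * θ) ^ 2 =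
      (m : ℝ) / 2 - Real.sin (4 * m * θ) / (4 * Real.sin (2 * θ)) := by
    have hc := cos_sum_aux θ m
    have : ∑ k ∈ Finset.range m, Real.sin ((2 * (k : ℝ) + 1) * θ) ^ 2 =
        (m : ℝ) / 2 - (∑ k ∈ Finset.range m, Real.cos (2 * ((2 * (k : ℝ) + 1) * θ))) / 2 := by
      simp only [Real.sin_sq_eq_half_sub]
      rw [Finset.sum_sub_distrib, Finset.sum_const, Finset.card_range, Finset.sum_div]
      push_cast; ring
    rw [this]
    rw [← hc, mul_comm (4:ℝ), ← div_div, mul_div_assoc, mul_div_cancel_right₀ _ hs.ne']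
    ring
  refine ⟨key, fun hge => ?_⟩
  have hm' : (0 : ℝ) < m := by exact_mod_cast hm
  have h1 : Real.sin (4 * m * θ) ≤ 1 := Real.sin_le_one _
  have h2 : (1:ℝ) ≤ (m : ℝ) * Real.sin (2 * θ) := by
    rw [div_le_iff₀ hs] at hge; linarith
  have h3 : Real.sin (4 * m * θ) / (4 * Real.sin (2 * θ)) ≤ (m : ℝ) / 4 := by
    rw [div_le_div_iff₀ (by positivity) (by norm_num)]
    nlinarith
  rw [key, ge_iff_le, one_div_mul_eq_div, le_div_iff₀ hm']
  linarith
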